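/- For λ > 0 and z > 0, the function r ↦ Φ(λ√r − z/√r) − exp(2λz)·Φ(−λ√r − z/√r), defined for r > 0, is equal to the cumulative distribution function t ↦ λ·∫_0^t p(r, z, λr) dr; i.e. for all t > 0, λ·∫_0^t p(r, z, λr) dr = Φ(λ√t − z/√t) − exp(2λz)·Φ(−λ√t − z/√t). -/

import Mathlib

open MeasureTheory Real intervalIntegral

/-- Gaussian density with variance `t` and mean `m`, evaluated at `x`. -/
noncomputable def gaussDensity (t x m : ℝ) : ℝ :=
  Real.exp (-(x - m) ^ 2 / (2 * t)) / Real.sqrt (2 * Real.pi * t)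

/-- Standard normal cumulative distribution function. -/
noncomputable def Phi (x : ℝ) : ℝ :=
  ∫ u in Set.Iic x, Real.exp (-u ^ 2 / 2) / Real.sqrt (2 * Real.pi)

noncomputable def stdG (u : ℝ) : ℝ := Real.exp (-u ^ 2 / 2) / Real.sqrt (2 * Real.pi)

lemma Phi_eq (x : ℝ) : Phi x = ∫ u in Set.Iic x, stdG u := rfl

lemma stdG_cont : Continuous stdG := by
  unfold stdG; fun_prop

lemma stdG_integrable : Integrable stdG := by
  unfold stdG
  apply Integrable.div_const
  have : ∀ u : ℝ, Real.exp (-u ^ 2 / 2) = Real.exp (-(1/2) * u ^ 2) := by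
    intro u; ring_nf
  simp_rw [this]
  exact integrable_exp_neg_mul_sq (by norm_num)

lemma hasDerivAt_Phi (x : ℝ) : HasDerivAt Phi (stdG x) x := by
  have key : ∀ y : ℝ, Phi y = Phi 0 + ∫ u in (0:ℝ)..y, stdG u := by
    intro y
    have := intervalIntegral.integral_Iic_sub_Iic (a := (0:ℝ)) (b := y) (f := stdG)
      stdG_integrable.integrableOn stdG_integrable.integrableOn
    rw [Phi_eq, Phi_eq]; linarith
  rw [funext key]
  exact ((intervalIntegral.integral_hasDerivAt_right
    (stdG_integrable.intervalIntegrable)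
    (stdG_cont.aestronglyMeasurable.stronglyMeasurableAtFilter)
    stdG_cont.continuousAt)).const_add _

open Set Filter in
lemma Phi_tendsto_atBot : Tendsto Phi atBot (nhds 0) := by
  have heq : Phi = fun x => ∫ u : ℝ, (Set.Iic x).indicator stdG u := by
    funext x
    rw [Phi_eq, ← MeasureTheory.integral_indicator measurableSet_Iic]
  rw [heq]
  have h0 : (0:ℝ) = ∫ _ : ℝ, (0:ℝ) := by simp
  rw [h0]
  apply MeasureTheory.tendsto_integral_filter_of_dominated_convergence (fun u => ‖stdG u‖)
  · filter_upwards with x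
    exact ((stdG_cont.aestronglyMeasurable).indicator measurableSet_Iic)
  · filter_upwards with x
    filter_upwards with u
    exact norm_indicator_le_norm_self _ _
  · exact stdG_integrable.norm
  · filter_upwards with u
    have h1 : ∀ᶠ x in atBot, (Set.Iic x).indicator stdG u = 0 := by
      filter_upwards [eventually_lt_atBot u] with x hx
      simp [indicator_of_notMem, not_le.mpr hx]
    exact Tendsto.congr' (h1.mono fun x hx => hx.symm) tendsto_const_nhds

lemma hkey (lam z t : ℝ) (ht : 0 < t) :
    Real.exp (2*lam*z) * stdG (-(lam*Real.sqrt t) - z/Real.sqrt t)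
      = stdG (lam*Real.sqrt t - z/Real.sqrt t) := by
  have hst : 0 < Real.sqrt t := Real.sqrt_pos.mpr ht
  have hst2 : Real.sqrt t ^ 2 = t := Real.sq_sqrt ht.le
  unfold stdG
  rw [← mul_div_assoc, ← Real.exp_add]
  congr 1
  field_simp
  ring_nf

lemma hfinal (lam z t : ℝ) (ht : 0 < t) :
    stdG (lam*Real.sqrt t - z/Real.sqrt t) * (lam / Real.sqrt t)
      = lam * gaussDensity t z (lam*t) := by
  have hst : 0 < Real.sqrt t := Real.sqrt_pos.mpr ht
  have hst2 : Real.sqrt t ^ 2 = t := Real.sq_sqrt ht.le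
  unfold stdG gaussDensity
  rw [show 2*Real.pi*t = (2*Real.pi)*t by ring, Real.sqrt_mul (by positivity)]
  rw [show -(lam*Real.sqrt t - z/Real.sqrt t)^2/2 = -(z - lam*t)^2/(2*t) by
    field_simp; linear_combination (z^2 - lam^2*t*(Real.sqrt t)^2) * hst2]
  have h2pi : (0:ℝ) < Real.sqrt (2*Real.pi) := Real.sqrt_pos.mpr (by positivity)
  field_simp
  ring_nf
  rw [show t*π*2 = (t*π)*2 by ring, Real.sqrt_mul (mul_nonneg ht.le Real.pi_pos.le), Real.sqrt_mul ht.le]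
  ring

lemma hasDerivAt_F (lam z t : ℝ) (ht : 0 < t) :
    HasDerivAt (fun s => Phi (lam * Real.sqrt s - z / Real.sqrt s)
        - Real.exp (2*lam*z) * Phi (-(lam * Real.sqrt s) - z / Real.sqrt s))
      (lam * gaussDensity t z (lam*t)) t := by
  have hst : 0 < Real.sqrt t := Real.sqrt_pos.mpr ht
  have hst2 : Real.sqrt t ^ 2 = t := Real.sq_sqrt ht.le
  have hs := Real.hasDerivAt_sqrt ht.ne'
  have hinv : HasDerivAt (fun s => z / Real.sqrt s) (-(z/(2*t*Real.sqrt t))) t := by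
    have h := ((hs.inv hst.ne').const_mul z)
    simp_rw [div_eq_mul_inv]
    refine h.congr_deriv ?_
    rw [hst2]
    field_simp
  have ha : HasDerivAt (fun s => lam * Real.sqrt s - z / Real.sqrt s)
      (lam/(2*Real.sqrt t) + z/(2*t*Real.sqrt t)) t := by
    have h := (hs.const_mul lam).sub hinv
    refine h.congr_deriv ?_
    field_simp
    ring
  have hb : HasDerivAt (fun s => -(lam * Real.sqrt s) - z / Real.sqrt s)
      (-(lam/(2*Real.sqrt t)) + z/(2*t*Real.sqrt t)) t := by
    have h := ((hs.const_mul lam).neg).sub hinv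
    refine h.congr_deriv ?_
    field_simp
    ring
  have hPa := (hasDerivAt_Phi _).comp t ha
  have hPb := ((hasDerivAt_Phi _).comp t hb).const_mul (Real.exp (2*lam*z))
  have hD := hPa.sub hPb
  refine hD.congr_deriv ?_
  rw [← hfinal lam z t ht]
  rw [show Real.exp (2*lam*z) * (stdG (-(lam*Real.sqrt t) - z/Real.sqrt t) *
        (-(lam/(2*Real.sqrt t)) + z/(2*t*Real.sqrt t)))
      = stdG (lam*Real.sqrt t - z/Real.sqrt t) *
        (-(lam/(2*Real.sqrt t)) + z/(2*t*Real.sqrt t)) by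
    rw [← mul_assoc, hkey lam z t ht]]
  field_simp
  ring

open Set Filter in
lemma gauss_intervalIntegrable (lam z t : ℝ) (ht : 0 < t) :
    IntervalIntegrable (fun r => gaussDensity r z (lam * r)) volume 0 t := by
  rw [intervalIntegrable_iff_integrableOn_Ioc_of_le ht.le]
  have hmeas : AEStronglyMeasurable (fun r => gaussDensity r z (lam * r))
      (volume.restrict (Ioc 0 t)) := by
    apply Measurable.aestronglyMeasurable
    unfold gaussDensity
    fun_prop
  have hdom : IntegrableOn (fun r : ℝ => (Real.sqrt (2*Real.pi))⁻¹ * r ^ (-(1/2) : ℝ))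
      (Ioc 0 t) volume := by
    apply Integrable.const_mul
    have := (intervalIntegral.intervalIntegrable_rpow' (a := (0:ℝ)) (b := t)
      (r := (-(1/2) : ℝ)) (by norm_num))
    rw [intervalIntegrable_iff_integrableOn_Ioc_of_le ht.le] at this
    exact this
  apply Integrable.mono hdom hmeas
  filter_upwards [self_mem_ae_restrict measurableSet_Ioc] with r hr
  have hr0 : 0 < r := hr.1
  rw [Real.norm_eq_abs, Real.norm_eq_abs]
  unfold gaussDensity
  have hpos : 0 < Real.sqrt (2 * Real.pi * r) := Real.sqrt_pos.mpr (by positivity)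
  rw [abs_of_nonneg (by positivity), abs_of_nonneg (by positivity)]
  rw [show 2*Real.pi*r = (2*Real.pi)*r by ring, Real.sqrt_mul (by positivity)]
  rw [div_le_iff₀ (by positivity)]
  have h1 : Real.exp (-(z - lam*r)^2 / (2*r)) ≤ 1 := by
    apply Real.exp_le_one_iff.mpr
    apply div_nonpos_of_nonpos_of_nonneg (by nlinarith [sq_nonneg (z - lam*r)]) (by positivity)
  have hs2 : Real.sqrt (2*Real.pi) ≠ 0 := by positivity
  have heq1 : (Real.sqrt (2*Real.pi))⁻¹ * r ^ (-(1/2):ℝ) *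
      (Real.sqrt (2*Real.pi) * Real.sqrt r) = 1 := by
    rw [Real.sqrt_eq_rpow r]
    rw [show (Real.sqrt (2*Real.pi))⁻¹ * r ^ (-(1/2):ℝ) *
        (Real.sqrt (2*Real.pi) * r ^ ((1/2):ℝ))
      = (Real.sqrt (2*Real.pi))⁻¹ * Real.sqrt (2*Real.pi) *
        (r ^ (-(1/2):ℝ) * r ^ ((1/2):ℝ)) by ring,
      inv_mul_cancel₀ hs2, ← Real.rpow_add hr0]
    norm_num
  rw [heq1]
  exact h1

open Set Filter in
theorem stmt_16 (lam z : ℝ) (hlam : 0 < lam) (hz : 0 < z) :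
    ∀ t : ℝ, 0 < t →
      lam * ∫ r in (0:ℝ)..t, gaussDensity r z (lam * r) =
        Phi (lam * Real.sqrt t - z / Real.sqrt t)
          - Real.exp (2 * lam * z) * Phi (-(lam * Real.sqrt t) - z / Real.sqrt t) := by
  intro t ht
  set F : ℝ → ℝ := fun s => Phi (lam * Real.sqrt s - z / Real.sqrt s)
      - Real.exp (2*lam*z) * Phi (-(lam * Real.sqrt s) - z / Real.sqrt s) with hFdef
  have hInt := gauss_intervalIntegrable lam z t ht
  set l : Filter ℝ := nhdsWithin 0 (Ioo 0 t) with hl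
  haveI hlne : l.NeBot := by
    rw [hl]
    apply mem_closure_iff_nhdsWithin_neBot.mp
    rw [closure_Ioo ht.ne]
    exact ⟨le_refl 0, ht.le⟩
  have hsub : ∀ s : ℝ, s ∈ Ioo 0 t → Set.uIcc s t ⊆ Set.uIcc 0 t := by
    intro s hs
    apply Set.uIcc_subset_uIcc
    · rw [Set.uIcc_of_le ht.le]; exact ⟨hs.1.le, hs.2.le⟩
    · rw [Set.uIcc_of_le ht.le]; exact ⟨ht.le, le_refl t⟩
  have hsub0 : ∀ s : ℝ, s ∈ Ioo 0 t → Set.uIcc 0 s ⊆ Set.uIcc 0 t := by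
    intro s hs
    apply Set.uIcc_subset_uIcc
    · rw [Set.uIcc_of_le ht.le]; exact ⟨le_refl 0, ht.le⟩
    · rw [Set.uIcc_of_le ht.le]; exact ⟨hs.1.le, hs.2.le⟩
  have hev : ∀ᶠ s in l, lam * (∫ r in s..t, gaussDensity r z (lam*r)) = F t - F s := by
    filter_upwards [self_mem_nhdsWithin] with s hs
    have hderiv : ∀ x ∈ Set.uIcc s t, HasDerivAt F (lam * gaussDensity x z (lam*x)) x := by
      intro x hx
      rw [Set.uIcc_of_le hs.2.le] at hx
      exact hasDerivAt_F lam z x (lt_of_lt_of_le hs.1 hx.1)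
    have hint2 : IntervalIntegrable (fun x => lam * gaussDensity x z (lam*x)) volume s t :=
      (hInt.mono_set (hsub s hs)).const_mul lam
    have h := intervalIntegral.integral_eq_sub_of_hasDerivAt hderiv hint2
    rw [intervalIntegral.integral_const_mul] at h
    exact h
  -- limit of integrals
  have hprim : Tendsto (fun s => ∫ r in (0:ℝ)..s, gaussDensity r z (lam*r)) l (nhds 0) := by
    have hc := intervalIntegral.continuousWithinAt_primitive
      (μ := volume) (f := fun r => gaussDensity r z (lam*r))
      (a := (0:ℝ)) (b₀ := (0:ℝ)) (b₁ := (0:ℝ)) (b₂ := t)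
      (measure_singleton 0) (by simp only [min_self, max_eq_right ht.le]; exact hInt)
    have := hc.tendsto
    simp only [intervalIntegral.integral_same] at this
    exact this.mono_left (nhdsWithin_mono _ Set.Ioo_subset_Icc_self)
  have h1 : Tendsto (fun s => lam * ∫ r in s..t, gaussDensity r z (lam*r)) l
      (nhds (lam * ∫ r in (0:ℝ)..t, gaussDensity r z (lam*r))) := by
    apply Tendsto.const_mul
    have hrw : ∀ᶠ s in l, (∫ r in (0:ℝ)..t, gaussDensity r z (lam*r))
        - (∫ r in (0:ℝ)..s, gaussDensity r z (lam*r))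
        = ∫ r in s..t, gaussDensity r z (lam*r) := by
      filter_upwards [self_mem_nhdsWithin] with s hs
      have := intervalIntegral.integral_add_adjacent_intervals
        (hInt.mono_set (hsub0 s hs)) (hInt.mono_set (hsub s hs))
      linarith
    refine Tendsto.congr' hrw ?_
    have := (tendsto_const_nhds (x := ∫ r in (0:ℝ)..t, gaussDensity r z (lam*r)) (f := l)).sub hprim
    simpa using this
  -- limit of F
  have hsq : Tendsto (fun s : ℝ => Real.sqrt s) l (nhdsWithin 0 (Ioi 0)) := by
    rw [tendsto_nhdsWithin_iff]
    constructor
    · have : Tendsto (fun s : ℝ => Real.sqrt s) (nhds 0) (nhds 0) := by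
        have := Real.continuous_sqrt.tendsto 0
        simpa using this
      exact this.mono_left nhdsWithin_le_nhds
    · filter_upwards [self_mem_nhdsWithin] with s hs
      exact Real.sqrt_pos.mpr hs.1
  have hsq0 : Tendsto (fun s : ℝ => Real.sqrt s) l (nhds 0) :=
    hsq.mono_right nhdsWithin_le_nhds
  have hzdiv : Tendsto (fun s : ℝ => z / Real.sqrt s) l atTop := by
    simp_rw [div_eq_mul_inv]
    exact (tendsto_inv_nhdsGT_zero.comp hsq).const_mul_atTop hz
  have hzdivneg : Tendsto (fun s : ℝ => -(z / Real.sqrt s)) l atBot :=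
    tendsto_neg_atTop_atBot.comp hzdiv
  have hA : Tendsto (fun s : ℝ => lam * Real.sqrt s - z / Real.sqrt s) l atBot := by
    have := ((hsq0.const_mul lam).add_atBot hzdivneg)
    simpa [sub_eq_add_neg] using this
  have hB : Tendsto (fun s : ℝ => -(lam * Real.sqrt s) - z / Real.sqrt s) l atBot := by
    have := (((hsq0.const_mul lam).neg).add_atBot hzdivneg)
    simpa [sub_eq_add_neg] using this
  have hF0 : Tendsto F l (nhds 0) := by
    have hPA := Phi_tendsto_atBot.comp hA
    have hPB := (Phi_tendsto_atBot.comp hB).const_mul (Real.exp (2*lam*z))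
    have := hPA.sub hPB
    simpa [hFdef] using this
  have h2 : Tendsto (fun s => F t - F s) l (nhds (F t)) := by
    have := (tendsto_const_nhds (x := F t) (f := l)).sub hF0
    simpa using this
  have := tendsto_nhds_unique h1 (h2.congr' (hev.mono fun s hs => hs.symm))
  rw [this]
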